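/- Suppose every static graph on n' vertices admits an (α,β)-spanner with at most f(n') edges. Then every temporal graph G on n vertices with lifetime L admits a temporal (α, L·β)-spanner H with at most L·f(n) edges: namely, letting G_i be the static graph of edges with label i and H_i an (α,β)-spanner of G_i, the union H of the H_i (with the original labels) satisfies d_H(u,v) ≤ α·d_G(u,v) + L·β for all u,v. -/

import Mathlib

/-- A temporal walk of length `k` from `u` to `v`: consecutive vertices are joined
by edges of the adjacency relation `adj` and the traversed labels are
non-decreasing. -/
def IsTempWalk {V : Type*} (adj : V → V → Prop) (lab : V → V → ℕ)
    (u v : V) (k : ℕ) (p : ℕ → V) : Prop :=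
  p 0 = u ∧ p k = v ∧ (∀ i, i < k → adj (p i) (p (i + 1))) ∧
    (∀ i, i + 1 < k → lab (p i) (p (i + 1)) ≤ lab (p (i + 1)) (p (i + 2)))

/-- The temporal distance from `u` to `v` (minimum number of edges of a temporal
path, `⊤` if none exists). -/
noncomputable def tdist {V : Type*} (adj : V → V → Prop) (lab : V → V → ℕ)
    (u v : V) : ℕ∞ :=
  sInf {m : ℕ∞ | ∃ k : ℕ, m = (k : ℕ∞) ∧ ∃ p : ℕ → V, IsTempWalk adj lab u v k p}

def labelGraph {V : Type*} (G : SimpleGraph V) (lab : V → V → ℕ)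
    (hsym : ∀ u v, lab u v = lab v u) (i : ℕ) : SimpleGraph V where
  Adj x y := G.Adj x y ∧ lab x y = i
  symm := ⟨fun x y h => ⟨h.1.symm, (hsym y x).trans h.2⟩⟩
  loopless := ⟨fun x h => G.loopless.irrefl x h.1⟩

lemma walkOfFun {V : Type*} (G : SimpleGraph V) (p : ℕ → V) :
    ∀ j : ℕ, (∀ i, i < j → G.Adj (p i) (p (i + 1))) →
      ∃ w : G.Walk (p 0) (p j), w.length ≤ j := by
  intro j
  induction j with
  | zero => exact fun _ => ⟨SimpleGraph.Walk.nil, by simp⟩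
  | succ j IH =>
    intro h
    obtain ⟨w, hw⟩ := IH (fun i hi => h i (by omega))
    exact ⟨w.concat (h j (by omega)), by simp [SimpleGraph.Walk.length_concat]; omega⟩

lemma key {n L α β : ℕ} {G H : SimpleGraph (Fin n)} {lab : Fin n → Fin n → ℕ}
    (hsym : ∀ u v, lab u v = lab v u)
    (Hsp : ℕ → SimpleGraph (Fin n))
    (hsubH : ∀ i, Hsp i ≤ H)
    (hsubL : ∀ i, Hsp i ≤ labelGraph G lab hsym i)
    (hspan : ∀ i, ∀ u v : Fin n, (labelGraph G lab hsym i).Reachable u v →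
      (Hsp i).Reachable u v ∧
        (Hsp i).dist u v ≤ α * (labelGraph G lab hsym i).dist u v + β)
    (hlife : ∀ u v : Fin n, G.Adj u v → lab u v ∈ Finset.Icc 1 L) :
    ∀ k : ℕ, ∀ u v : Fin n, ∀ l : ℕ, 1 ≤ l → l ≤ L + 1 → ∀ p : ℕ → Fin n,
      IsTempWalk G.Adj lab u v k p → (∀ m, m < k → l ≤ lab (p m) (p (m + 1))) →
      ∃ k' : ℕ, ∃ q : ℕ → Fin n, IsTempWalk H.Adj lab u v k' q ∧
        (∀ m, m < k' → l ≤ lab (q m) (q (m + 1))) ∧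
        k' + l * β ≤ α * k + (L + 1) * β := by
  classical
  intro k
  induction k using Nat.strong_induction_on with
  | _ k IH =>
  intro u v l hl1 hlL p hp hlab
  obtain ⟨hp0, hpk, hpadj, hpmono⟩ := hp
  rcases Nat.eq_zero_or_pos k with hk | hk
  · subst hk
    refine ⟨0, p, ⟨hp0, hpk, by omega, by omega⟩, by omega, ?_⟩
    have : l * β ≤ (L + 1) * β := Nat.mul_le_mul_right β hlL
    omega
  -- the first label
  set i := lab (p 0) (p 1) with hidef
  have hiIcc : 1 ≤ i ∧ i ≤ L := by
    have := hlife _ _ (hpadj 0 hk)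
    rw [Finset.mem_Icc] at this
    exact this
  have hli : l ≤ i := hlab 0 hk
  -- monotonicity of labels along the walk
  have hmono : ∀ a b : ℕ, a ≤ b → b < k → lab (p a) (p (a + 1)) ≤ lab (p b) (p (b + 1)) := by
    intro a b hab
    induction b with
    | zero =>
      intro _
      have ha : a = 0 := by omega
      subst ha
      exact le_rfl
    | succ b IHb =>
      intro hbk
      rcases Nat.eq_or_lt_of_le hab with h | h
      · subst h; exact le_rfl
      · exact le_trans (IHb (by omega) (by omega)) (hpmono b hbk)
  -- the maximal prefix with label i
  set P : ℕ → Prop := fun j => ∀ m, m < j → lab (p m) (p (m + 1)) = i with hPdef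
  have hP1 : P 1 := by
    intro m hm
    have hm0 : m = 0 := by omega
    subst hm0
    rfl
  set j := Nat.findGreatest P k with hjdef
  have h1j : 1 ≤ j := Nat.le_findGreatest hk hP1
  have hjk : j ≤ k := Nat.findGreatest_le k
  have hPj : P j := Nat.findGreatest_spec hk hP1
  -- every edge from index j on has label ≥ i + 1
  have hjlab : ∀ m, j ≤ m → m < k → i + 1 ≤ lab (p m) (p (m + 1)) := by
    have hedgej : ∀ hjk' : j < k, i + 1 ≤ lab (p j) (p (j + 1)) := by
      intro hjk'
      have hnot : ¬ P (j + 1) :=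
        Nat.findGreatest_is_greatest (n := k) (by rw [← hjdef]; omega) (by omega)
      have hge : i ≤ lab (p j) (p (j + 1)) := hmono 0 j (by omega) hjk'
      rcases Nat.eq_or_lt_of_le hge with h | h
      · exfalso; apply hnot; intro m hm
        rcases Nat.lt_or_ge m j with hmj | hmj
        · exact hPj m hmj
        · have : m = j := by omega
          subst this; exact h.symm
      · omega
    intro m hjm hmk
    exact le_trans (hedgej (by omega)) (hmono j m hjm hmk)
  -- the prefix is a walk in the label-i graph
  have hpre : ∀ m, m < j → (labelGraph G lab hsym i).Adj (p m) (p (m + 1)) := by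
    intro m hm
    exact ⟨hpadj m (by omega), hPj m hm⟩
  obtain ⟨w, hwlen⟩ := walkOfFun (labelGraph G lab hsym i) p j hpre
  obtain ⟨hreach, hdist⟩ := hspan i (p 0) (p j) w.reachable
  obtain ⟨wH, hwHlen⟩ := hreach.exists_walk_length_eq_dist
  set d := wH.length with hddef
  have hd : d ≤ α * j + β := by
    have h1 : (labelGraph G lab hsym i).dist (p 0) (p j) ≤ j :=
      le_trans (SimpleGraph.dist_le w) hwlen
    calc d = (Hsp i).dist (p 0) (p j) := hwHlen
      _ ≤ α * (labelGraph G lab hsym i).dist (p 0) (p j) + β := hdist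
      _ ≤ α * j + β := by
          exact Nat.add_le_add_right (Nat.mul_le_mul_left α h1) β
  set q1 : ℕ → Fin n := wH.getVert with hq1def
  have hq10 : q1 0 = p 0 := SimpleGraph.Walk.getVert_zero wH
  have hq1d : q1 d = p j := SimpleGraph.Walk.getVert_length wH
  have hq1adj : ∀ t, t < d → (Hsp i).Adj (q1 t) (q1 (t + 1)) :=
    fun t ht => wH.adj_getVert_succ ht
  have hq1lab : ∀ t, t < d → lab (q1 t) (q1 (t + 1)) = i :=
    fun t ht => (hsubL i (hq1adj t ht)).2
  -- the suffix walk
  set p' : ℕ → Fin n := fun m => p (j + m) with hp'def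
  have hp'walk : IsTempWalk G.Adj lab (p j) v (k - j) p' := by
    refine ⟨by simp [hp'def], ?_, ?_, ?_⟩
    · show p (j + (k - j)) = v
      rw [Nat.add_sub_cancel' hjk]; exact hpk
    · intro m hm
      have h1 : j + (m + 1) = (j + m) + 1 := by omega
      show G.Adj (p (j + m)) (p (j + (m + 1)))
      rw [h1]; exact hpadj (j + m) (by omega)
    · intro m hm
      have h1 : j + (m + 1) = (j + m) + 1 := by omega
      have h2 : j + (m + 2) = (j + m) + 2 := by omega
      show lab (p (j + m)) (p (j + (m + 1))) ≤ lab (p (j + (m + 1))) (p (j + (m + 2)))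
      rw [h1, h2]; exact hpmono (j + m) (by omega)
  have hp'lab : ∀ m, m < k - j → i + 1 ≤ lab (p' m) (p' (m + 1)) := by
    intro m hm
    have h1 : j + (m + 1) = (j + m) + 1 := by omega
    show i + 1 ≤ lab (p (j + m)) (p (j + (m + 1)))
    rw [h1]; exact hjlab (j + m) (by omega) (by omega)
  obtain ⟨k'', q2, hq2walk, hq2lab, hq2bound⟩ :=
    IH (k - j) (by omega) (p j) v (i + 1) (by omega) (by omega) p' hp'walk hp'lab
  obtain ⟨hq20, hq2k, hq2adj, hq2mono⟩ := hq2walk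
  -- splice the two walks
  set q : ℕ → Fin n := fun m => if m ≤ d then q1 m else q2 (m - d) with hqdef
  have hqa : ∀ m, m ≤ d → q m = q1 m := by intro m hm; simp [hqdef, hm]
  have hqb : ∀ m, q (d + m) = q2 m := by
    intro m
    rcases Nat.eq_zero_or_pos m with h | h
    · subst h; simp [hqdef, hq1d, hq20]
    · have : ¬ (d + m ≤ d) := by omega
      simp [hqdef, this]
  set k' := d + k'' with hk'def
  -- adjacency and labels of individual edges of q
  have hqadj1 : ∀ t, t < d → (Hsp i).Adj (q t) (q (t + 1)) := by
    intro t ht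
    rw [hqa t (by omega), hqa (t + 1) (by omega)]
    exact hq1adj t ht
  have e1 : ∀ t, d ≤ t → q t = q2 (t - d) := by
    intro t ht
    have h1 : t = d + (t - d) := by omega
    conv_lhs => rw [h1]
    exact hqb _
  have hqadj2 : ∀ t, d ≤ t → t < k' → H.Adj (q t) (q (t + 1)) := by
    intro t ht htk
    rw [e1 t ht, e1 (t + 1) (by omega), show t + 1 - d = (t - d) + 1 by omega]
    exact hq2adj (t - d) (by omega)
  have hqlab2 : ∀ t, d ≤ t → t < k' →
      lab (q t) (q (t + 1)) = lab (q2 (t - d)) (q2 ((t - d) + 1)) := by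
    intro t ht htk
    rw [e1 t ht, e1 (t + 1) (by omega), show t + 1 - d = (t - d) + 1 by omega]
  have hqlab1 : ∀ t, t < d → lab (q t) (q (t + 1)) = i := by
    intro t ht
    rw [hqa t (by omega), hqa (t + 1) (by omega)]
    exact hq1lab t ht
  refine ⟨k', q, ⟨?_, ?_, ?_, ?_⟩, ?_, ?_⟩
  · rw [hqa 0 (by omega), hq10, hp0]
  · show q (d + k'') = v
    rw [hqb]; exact hq2k
  · intro t ht
    rcases Nat.lt_or_ge t d with h | h
    · exact hsubH i (hqadj1 t h)
    · exact hqadj2 t h ht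
  · intro t ht
    rcases Nat.lt_or_ge (t + 1) d with h | h
    · rw [hqlab1 t (by omega), hqlab1 (t + 1) h]
    · rcases Nat.lt_or_ge t d with h' | h'
      · -- t < d ≤ t + 1, so t + 1 = d
        have hlow : i + 1 ≤ lab (q2 ((t + 1 - d)))
            (q2 ((t + 1 - d) + 1)) := hq2lab (t + 1 - d) (by omega)
        rw [hqlab1 t h', hqlab2 (t + 1) h (by omega)]
        omega
      · rw [hqlab2 t h' (by omega), hqlab2 (t + 1) (by omega) (by omega)]
        have h1 : t + 1 - d = (t - d) + 1 := by omega
        have h2 : (t + 1 - d) + 1 = (t - d) + 2 := by omega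
        rw [h2, h1]
        exact hq2mono (t - d) (by omega)
  · intro m hm
    rcases Nat.lt_or_ge m d with h | h
    · rw [hqlab1 m h]; exact hli
    · rw [hqlab2 m h (by omega)]
      have := hq2lab (m - d) (by omega)
      omega
  · have h1 : α * j + α * (k - j) = α * k := by
      rw [← Nat.mul_add, Nat.add_sub_cancel' hjk]
    have h2 : l * β ≤ i * β := Nat.mul_le_mul_right β hli
    have h2' : l * β ≤ i * β := h2
    calc k' + l * β = d + k'' + l * β := by rw [hk'def]
      _ ≤ (α * j + β) + k'' + l * β :=
          Nat.add_le_add_right (Nat.add_le_add_right hd k'') _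
      _ ≤ (α * j + β) + k'' + i * β := Nat.add_le_add_left h2' _
      _ = α * j + (k'' + (i + 1) * β) := by ring
      _ ≤ α * j + (α * (k - j) + (L + 1) * β) := Nat.add_le_add_left hq2bound _
      _ = (α * j + α * (k - j)) + (L + 1) * β := by ring
      _ = α * k + (L + 1) * β := by rw [h1]

lemma sup_edgeSet_ncard {n : ℕ} (c : ℕ) :
    ∀ (s : Finset ℕ) (F : ℕ → SimpleGraph (Fin n)),
      (∀ i ∈ s, (F i).edgeSet.ncard ≤ c) →
      ((s.sup F).edgeSet.ncard ≤ s.card * c) := by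
  intro s
  induction s using Finset.induction_on with
  | empty => intro F _; simp
  | @insert a s ha IH =>
    intro F hF
    rw [Finset.sup_insert, Finset.card_insert_of_notMem ha]
    calc ((F a ⊔ s.sup F).edgeSet).ncard
        ≤ (F a).edgeSet.ncard + ((s.sup F).edgeSet).ncard := by
          rw [SimpleGraph.edgeSet_sup]; exact Set.ncard_union_le _ _
      _ ≤ c + s.card * c := by
          exact Nat.add_le_add (hF a (Finset.mem_insert_self a s))
            (IH F (fun i hi => hF i (Finset.mem_insert_of_mem hi)))
      _ = (s.card + 1) * c := by ring


/-- If every static graph on `n'` vertices admits an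
`(α,β)`-spanner with at most `f n'` edges, then every temporal graph `G` on `n`
vertices with lifetime `L` (labels in `{1,…,L}`) admits a temporal
`(α, L·β)`-spanner with at most `L·f n` edges. -/
theorem stmt_15 (n L α β : ℕ) (hα : 1 ≤ α) (f : ℕ → ℕ)
    (hstatic : ∀ (n' : ℕ) (G' : SimpleGraph (Fin n')),
      ∃ H' : SimpleGraph (Fin n'), H' ≤ G' ∧ H'.edgeSet.ncard ≤ f n' ∧
        ∀ u v : Fin n', G'.Reachable u v →
          H'.Reachable u v ∧ H'.dist u v ≤ α * G'.dist u v + β)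
    (G : SimpleGraph (Fin n)) (lab : Fin n → Fin n → ℕ)
    (hsym : ∀ u v, lab u v = lab v u)
    (hlife : ∀ u v : Fin n, G.Adj u v → lab u v ∈ Finset.Icc 1 L) :
    ∃ H : SimpleGraph (Fin n), H ≤ G ∧ H.edgeSet.ncard ≤ L * f n ∧
      ∀ u v : Fin n,
        tdist H.Adj lab u v ≤
          (α : ℕ∞) * tdist G.Adj lab u v + ((L * β : ℕ) : ℕ∞) := by
  classical
  choose Hsp hsub hcard hspan using fun i => hstatic n (labelGraph G lab hsym i)
  set H : SimpleGraph (Fin n) := (Finset.Icc 1 L).sup Hsp with hHdef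
  have hsubH : ∀ i, i ∈ Finset.Icc 1 L → Hsp i ≤ H := fun i hi => Finset.le_sup hi
  have hHG : H ≤ G :=
    Finset.sup_le fun i _ => le_trans (hsub i) (fun _ _ h => h.1)
  refine ⟨H, hHG, ?_, ?_⟩
  · calc H.edgeSet.ncard ≤ (Finset.Icc 1 L).card * f n :=
        sup_edgeSet_ncard (f n) _ Hsp (fun i _ => hcard i)
      _ = L * f n := by rw [Nat.card_Icc]; simp
  intro u v
  set T : Set ℕ := {k : ℕ | ∃ p : ℕ → Fin n, IsTempWalk G.Adj lab u v k p} with hTdef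
  by_cases hT : T.Nonempty
  · -- take a temporal walk of minimum length
    have hk0 : sInf T ∈ T := Nat.sInf_mem hT
    obtain ⟨p, hp⟩ := hk0
    set k0 := sInf T with hk0def
    have hlab1 : ∀ m, m < k0 → 1 ≤ lab (p m) (p (m + 1)) := by
      intro m hm
      have := hlife _ _ (hp.2.2.1 m hm)
      rw [Finset.mem_Icc] at this
      exact this.1
    -- build Hsp i adjacent-label walks
    obtain ⟨k', q, hq, -, hbound⟩ :=
      key hsym Hsp (fun i => by
          by_cases hi : i ∈ Finset.Icc 1 L
          · exact hsubH i hi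
          · intro x y hxy
            exfalso
            have h1 := (hsub i hxy).1
            have h2 := (hsub i hxy).2
            have := hlife _ _ h1
            rw [h2] at this
            exact hi this)
        hsub hspan hlife k0 u v 1 le_rfl (by omega) p hp hlab1
    have hk' : k' ≤ α * k0 + L * β := by
      have : (L + 1) * β = L * β + β := by ring
      omega
    have h1 : tdist H.Adj lab u v ≤ (k' : ℕ∞) := by
      unfold tdist
      exact sInf_le ⟨k', rfl, q, hq⟩
    have h2 : ((k0 : ℕ) : ℕ∞) ≤ tdist G.Adj lab u v := by
      unfold tdist
      apply le_sInf
      rintro m ⟨k, rfl, pp, hpp⟩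
      have hkT : k ∈ T := ⟨pp, hpp⟩
      exact_mod_cast Nat.sInf_le hkT
    calc tdist H.Adj lab u v ≤ (k' : ℕ∞) := h1
      _ ≤ ((α * k0 + L * β : ℕ) : ℕ∞) := by exact_mod_cast hk'
      _ = (α : ℕ∞) * (k0 : ℕ∞) + ((L * β : ℕ) : ℕ∞) := by push_cast; ring
      _ ≤ (α : ℕ∞) * tdist G.Adj lab u v + ((L * β : ℕ) : ℕ∞) := by
          exact add_le_add_left (mul_le_mul_right h2 _) _
  · -- no temporal walk at all: the right-hand side is ⊤
    have hempty : {m : ℕ∞ | ∃ k : ℕ, m = (k : ℕ∞) ∧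
        ∃ p : ℕ → Fin n, IsTempWalk G.Adj lab u v k p} = ∅ := by
      ext m
      simp only [Set.mem_setOf_eq, Set.mem_empty_iff_false, iff_false]
      rintro ⟨k, rfl, p, hp⟩
      exact hT ⟨k, p, hp⟩
    have htop : tdist G.Adj lab u v = ⊤ := by
      rw [tdist, hempty, sInf_empty]
    rw [htop]
    have : (α : ℕ∞) * ⊤ = ⊤ := by
      refine ENat.mul_top ?_
      exact_mod_cast Nat.pos_iff_ne_zero.mp hα
    rw [this, top_add]
    exact le_top
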